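/- Let n ≥ 1 and let Δ ⊂ ℝⁿ be a convex body with nonempty interior. Set σ := min_{x ∈ Δ} p₁(x), S₀ := max_{x ∈ Δ} p₁(x), and let ι denote the affine dimension of the top slice Δ ∩ p₁⁻¹(S₀). Then there exists a constant C > 0 such that for every integer k ≥ 1 and every s ∈ [(σ + S₀)/2, S₀] with k·(S₀ − s) ≥ C, one has #(Δ ∩ {x ∈ ℝⁿ : p₁(x) > s} ∩ ℤⁿ/k) ≥ C⁻¹·(S₀ − s)^{n−ι}·kⁿ. -/

import Mathlib

open Set

/-- The rescaled lattice `ℤⁿ/k` inside `ℝⁿ`. -/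
def lpts (n k : ℕ) : Set (EuclideanSpace ℝ (Fin n)) :=
  {x | ∀ i, ∃ m : ℤ, (k : ℝ) * x i = (m : ℝ)}



lemma abs_apply_le_norm {n : ℕ} (x : EuclideanSpace ℝ (Fin n)) (i : Fin n) : |x i| ≤ ‖x‖ := by
  rw [EuclideanSpace.norm_eq, ← Real.sqrt_sq_eq_abs]
  apply Real.sqrt_le_sqrt
  calc x i ^ 2 = ‖x i‖ ^ 2 := by rw [Real.norm_eq_abs, sq_abs]
  _ ≤ _ := Finset.single_le_sum (f := fun j => ‖x j‖ ^ 2) (fun j _ => sq_nonneg _)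
      (Finset.mem_univ i)

lemma norm_le_of_coords {n : ℕ} (hn : 0 < n) (w : EuclideanSpace ℝ (Fin n)) (ρ : ℝ)
    (hρ : 0 ≤ ρ) (h : ∀ i, |w i| ≤ ρ / n) : ‖w‖ ≤ ρ := by
  rw [EuclideanSpace.norm_eq]
  have hn' : (0:ℝ) < n := by exact_mod_cast hn
  have h1 : ∑ i, ‖w i‖ ^ 2 ≤ n * (ρ / n) ^ 2 := by
    calc ∑ i, ‖w i‖ ^ 2 ≤ ∑ _ : Fin n, (ρ / n) ^ 2 := by
          apply Finset.sum_le_sum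
          intro i _
          have := h i
          have h0 : (0:ℝ) ≤ ρ / n := by positivity
          rw [Real.norm_eq_abs]
          nlinarith [abs_nonneg (w i)]
      _ = n * (ρ / n) ^ 2 := by rw [Finset.sum_const]; simp [nsmul_eq_mul]
  have h2 : (n:ℝ) * (ρ / n) ^ 2 ≤ ρ ^ 2 := by
    have hn1 : (1:ℝ) ≤ (n:ℝ) := by exact_mod_cast hn
    calc (n:ℝ) * (ρ / n) ^ 2 = ρ ^ 2 / n := by field_simp
      _ ≤ ρ ^ 2 := div_le_self (sq_nonneg _) hn1
  calc Real.sqrt (∑ i, ‖w i‖ ^ 2) ≤ Real.sqrt (ρ ^ 2) := Real.sqrt_le_sqrt (h1.trans h2)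
    _ = ρ := Real.sqrt_sq hρ

lemma finite_inter_lpts {n k : ℕ} (hk : 1 ≤ k) {s : Set (EuclideanSpace ℝ (Fin n))}
    (hs : Bornology.IsBounded s) : (s ∩ lpts n k).Finite := by
  obtain ⟨R, hR⟩ := hs.subset_closedBall 0
  have hk0 : (0:ℝ) < (k:ℝ) := by exact_mod_cast hk
  set f : EuclideanSpace ℝ (Fin n) → (Fin n → ℤ) := fun x i => ⌊(k:ℝ) * x i⌋ with hf
  have key : ∀ x ∈ s ∩ lpts n k, ∀ i, (k:ℝ) * x i = ((f x i : ℤ) : ℝ) := by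
    rintro x ⟨_, hx⟩ i
    obtain ⟨m, hm⟩ := hx i
    rw [hf]; simp only
    rw [hm, Int.floor_intCast]
  have hinj : Set.InjOn f (s ∩ lpts n k) := by
    intro x hx y hy hxy
    ext i
    have h1 := key x hx i
    have h2 := key y hy i
    rw [hxy] at h1
    have : (k:ℝ) * x i = (k:ℝ) * y i := by rw [h1, h2]
    exact mul_left_cancel₀ (ne_of_gt hk0) this
  have himg : f '' (s ∩ lpts n k) ⊆ Set.pi Set.univ
      (fun _ : Fin n => Set.Icc (⌊-((k:ℝ)*R)⌋) ⌊(k:ℝ)*R⌋) := by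
    rintro - ⟨x, hx, rfl⟩
    intro i _
    have hxR : ‖x‖ ≤ R := by
      have := hR hx.1
      simpa [Metric.mem_closedBall, dist_zero_right] using this
    have habs : |x i| ≤ R := (abs_apply_le_norm x i).trans hxR
    constructor
    · apply Int.floor_le_floor
      rw [neg_le, ← mul_neg]
      apply mul_le_mul_of_nonneg_left _ (le_of_lt hk0)
      linarith [(abs_le.mp habs).1]
    · apply Int.floor_le_floor
      apply mul_le_mul_of_nonneg_left _ (le_of_lt hk0)
      exact (abs_le.mp habs).2
  exact Set.Finite.of_finite_image
    ((Set.Finite.pi (fun _ => Set.finite_Icc _ _)).subset himg) hinj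

lemma exists_beta {N ι : ℕ} (v : Fin ι → EuclideanSpace ℝ (Fin N))
    (hv : LinearIndependent ℝ v) :
    ∃ β : ℝ, 0 < β ∧ ∀ c : Fin ι → ℝ, ∀ j, β * |c j| ≤ ‖∑ i, c i • v i‖ := by
  set L : (Fin ι → ℝ) →ₗ[ℝ] EuclideanSpace ℝ (Fin N) :=
    { toFun := fun c => ∑ i, c i • v i
      map_add' := by intro a b; simp [add_smul, Finset.sum_add_distrib]
      map_smul' := by intro m a; simp [smul_smul, Finset.smul_sum]
    } with hL
  have hker : LinearMap.ker L = ⊥ := by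
    rw [LinearMap.ker_eq_bot']
    intro c hc
    funext j
    exact Fintype.linearIndependent_iff.mp hv c hc j
  obtain ⟨K, hK, hanti⟩ := L.exists_antilipschitzWith hker
  refine ⟨(K:ℝ)⁻¹, by positivity, fun c j => ?_⟩
  have h1 : ‖c‖ ≤ (K:ℝ) * ‖L c‖ := by
    have := hanti.le_mul_dist c 0
    simpa [dist_zero_right, map_zero, dist_eq_norm] using this
  have h2 : |c j| ≤ ‖c‖ := by
    simpa [Real.norm_eq_abs] using norm_le_pi_norm c j
  have hKpos : (0:ℝ) < K := hK
  rw [inv_mul_le_iff₀ hKpos] at *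
  calc |c j| ≤ ‖c‖ := h2
    _ ≤ (K:ℝ) * ‖L c‖ := h1

lemma card_Icc_ge (a b : ℝ) : (b - a - 1 : ℝ) ≤ ((Finset.Icc ⌈a⌉ ⌊b⌋).card : ℝ) := by
  rw [Int.card_Icc]
  have h1 : ((⌊b⌋ + 1 - ⌈a⌉ : ℤ) : ℝ) ≤ (((⌊b⌋ + 1 - ⌈a⌉ : ℤ).toNat : ℤ) : ℝ) := by
    exact_mod_cast Int.self_le_toNat _
  calc (b - a - 1 : ℝ) ≤ ((⌊b⌋ + 1 - ⌈a⌉ : ℤ) : ℝ) := by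
        push_cast
        linarith [Int.sub_one_lt_floor b, Int.ceil_lt_add_one a]
    _ ≤ _ := by exact_mod_cast h1

lemma combo_mem_convex {N ι : ℕ} {F : Set (EuclideanSpace ℝ (Fin N))} (hF : Convex ℝ F)
    (f : Fin (ι+1) → EuclideanSpace ℝ (Fin N)) (hf : ∀ j, f j ∈ F)
    (c : Fin ι → ℝ) (hc0 : ∀ j, 0 ≤ c j) (hc1 : ∑ j, c j ≤ 1) :
    f 0 + ∑ j, c j • (f (Fin.succ j) - f 0) ∈ F := by
  have h : f 0 + ∑ j, c j • (f (Fin.succ j) - f 0)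
      = ∑ i : Fin (ι+1), (Fin.cases (1 - ∑ j, c j) c i : ℝ) • f i := by
    rw [Fin.sum_univ_succ]
    simp only [Fin.cases_zero, Fin.cases_succ]
    rw [sub_smul, one_smul, Finset.sum_smul]
    simp only [smul_sub]
    rw [Finset.sum_sub_distrib]
    abel
  rw [h]
  apply hF.sum_mem
  · intro i _
    induction i using Fin.cases with
    | zero => simpa using by linarith
    | succ j => simpa using hc0 j
  · rw [Fin.sum_univ_succ]
    simp
  · intro i _
    exact hf i

lemma coord_sum {N : ℕ} {α : Type*} (i : Fin N) (s : Finset α)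
    (f : α → EuclideanSpace ℝ (Fin N)) : (∑ a ∈ s, f a) i = ∑ a ∈ s, f a i :=
  by rw [WithLp.ofLp_sum]; exact Finset.sum_apply i s _


set_option maxHeartbeats 2000000 in
theorem stmt12 (n : ℕ) (hn : 0 < n) (Δ : Set (EuclideanSpace ℝ (Fin n)))
    (hne : Δ.Nonempty) (hcp : IsCompact Δ) (hcv : Convex ℝ Δ)
    (hint : (interior Δ).Nonempty)
    (σ S₀ : ℝ)
    (hσ : σ = sInf ((fun x : EuclideanSpace ℝ (Fin n) => x ⟨0, hn⟩) '' Δ))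
    (hS₀ : S₀ = sSup ((fun x : EuclideanSpace ℝ (Fin n) => x ⟨0, hn⟩) '' Δ))
    (ι : ℕ)
    (hι : ι = Module.finrank ℝ
        (affineSpan ℝ (Δ ∩ {x : EuclideanSpace ℝ (Fin n) | x ⟨0, hn⟩ = S₀})).direction) :
    ∃ C : ℝ, 0 < C ∧ ∀ k : ℕ, 1 ≤ k → ∀ s : ℝ, (σ + S₀) / 2 ≤ s → s ≤ S₀ →
      C ≤ (k : ℝ) * (S₀ - s) →
      C⁻¹ * (S₀ - s) ^ (n - ι) * (k : ℝ) ^ n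
        ≤ ((Δ ∩ {x : EuclideanSpace ℝ (Fin n) | s < x ⟨0, hn⟩} ∩ lpts n k).ncard : ℝ) := by
  classical
  set e0 : Fin n := ⟨0, hn⟩ with he0
  have hπ : Continuous fun x : EuclideanSpace ℝ (Fin n) => x e0 :=
    (EuclideanSpace.proj (𝕜 := ℝ) e0).continuous
  have hKim : IsCompact ((fun x : EuclideanSpace ℝ (Fin n) => x e0) '' Δ) := hcp.image hπ
  have hS₀mem : S₀ ∈ (fun x : EuclideanSpace ℝ (Fin n) => x e0) '' Δ := by
    rw [hS₀]; exact hKim.sSup_mem (hne.image _)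
  have hσmem : σ ∈ (fun x : EuclideanSpace ℝ (Fin n) => x e0) '' Δ := by
    rw [hσ]; exact hKim.sInf_mem (hne.image _)
  obtain ⟨xtop, hxtopΔ, hxtope⟩ := hS₀mem
  obtain ⟨xbot, hxbotΔ, hxbote⟩ := hσmem
  have hle : ∀ x ∈ Δ, x e0 ≤ S₀ := fun x hx => hS₀ ▸ le_csSup hKim.bddAbove ⟨x, hx, rfl⟩
  have hge : ∀ x ∈ Δ, σ ≤ x e0 := fun x hx => hσ ▸ csInf_le hKim.bddBelow ⟨x, hx, rfl⟩
  -- interior ball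
  obtain ⟨p₀, hp₀⟩ := hint
  obtain ⟨ε, hε, hball⟩ := Metric.isOpen_iff.mp isOpen_interior p₀ hp₀
  have hcball : Metric.closedBall p₀ (ε/2) ⊆ Δ :=
    (Metric.closedBall_subset_ball (by linarith)).trans (hball.trans interior_subset)
  have hp₀Δ : p₀ ∈ Δ := interior_subset hp₀
  -- σ < S₀
  have hσS : σ + ε/2 ≤ S₀ := by
    have hq : ∀ c : ℝ, |c| ≤ ε/2 → p₀ + c • EuclideanSpace.single e0 (1:ℝ) ∈ Δ := by
      intro c hc
      apply hcball
      rw [Metric.mem_closedBall, dist_eq_norm, add_sub_cancel_left, norm_smul,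
        EuclideanSpace.norm_single]
      simpa using hc
    have hcoord : ∀ c : ℝ, (p₀ + c • EuclideanSpace.single e0 (1:ℝ)) e0 = p₀ e0 + c := by
      intro c
      show p₀ e0 + c • (EuclideanSpace.single e0 (1:ℝ)) e0 = p₀ e0 + c
      rw [EuclideanSpace.single_apply]
      simp
    have h1 := hle _ (hq (ε/4) (by rw [abs_of_pos (by linarith)]; linarith))
    have h2 := hge _ (hq (-(ε/4)) (by rw [abs_neg, abs_of_pos (by linarith)]; linarith))
    rw [hcoord] at h1 h2
    linarith
  -- the low interior ball
  obtain ⟨p, hp⟩ : ∃ p : EuclideanSpace ℝ (Fin n), p = (1/2 : ℝ) • xbot + (1/2 : ℝ) • p₀ :=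
    ⟨_, rfl⟩
  obtain ⟨r, hr⟩ : ∃ r : ℝ, r = ε/8 := ⟨_, rfl⟩
  have hrpos : 0 < r := by rw [hr]; linarith
  have hpball : Metric.closedBall p r ⊆ Δ := by
    intro w hw
    rw [Metric.mem_closedBall] at hw
    have hu : p₀ + (2:ℝ) • (w - p) ∈ Metric.closedBall p₀ (ε/2) := by
      rw [Metric.mem_closedBall, dist_eq_norm, add_sub_cancel_left, norm_smul]
      rw [dist_eq_norm] at hw
      rw [hr] at hw
      simp only [Real.norm_ofNat]
      linarith [hw]
    have hmem := hcv hxbotΔ (hcball hu) (by norm_num : (0:ℝ) ≤ 1/2)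
      (by norm_num : (0:ℝ) ≤ 1/2) (by norm_num)
    have heq : (1/2:ℝ) • xbot + (1/2:ℝ) • (p₀ + (2:ℝ) • (w - p)) = w := by
      rw [hp]; module
    rwa [heq] at hmem
  have hpe : p e0 = (σ + p₀ e0)/2 := by
    have h1 : xbot e0 = σ := hxbote
    rw [hp]
    show (1/2:ℝ) * xbot e0 + (1/2:ℝ) * p₀ e0 = (σ + p₀ e0)/2
    rw [h1]; ring
  have hpe2 : p e0 ≤ (σ + S₀)/2 := by
    rw [hpe]; have := hle p₀ hp₀Δ; linarith
  -- the top face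
  obtain ⟨F, hF⟩ : ∃ F : Set (EuclideanSpace ℝ (Fin n)),
      F = Δ ∩ {x : EuclideanSpace ℝ (Fin n) | x e0 = S₀} := ⟨_, rfl⟩
  rw [he0] at hF
  rw [← hF] at hι
  have hFΔ : F ⊆ Δ := by rw [hF]; exact Set.inter_subset_left
  have hFtop : ∀ x ∈ F, x e0 = S₀ := by
    intro x hx; rw [hF] at hx; exact hx.2
  have hFcv : Convex ℝ F := by
    rw [hF]
    apply hcv.inter
    intro x hx y hy a b ha hb hab
    simp only [Set.mem_setOf_eq] at hx hy ⊢
    show a • x e0 + b • y e0 = S₀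
    rw [hx, hy, smul_eq_mul, smul_eq_mul, ← add_mul, hab, one_mul]
  have hxtopF : xtop ∈ F := by rw [hF]; exact ⟨hxtopΔ, hxtope⟩
  -- affinely independent points in F
  obtain ⟨tset, htsub, htspan, htind⟩ :=
    exists_affineIndependent ℝ (EuclideanSpace ℝ (Fin n)) F
  have htfin : tset.Finite := finite_set_of_fin_dim_affineIndependent ℝ htind
  haveI := htfin.fintype
  have htne : tset.Nonempty := by
    by_contra h
    rw [Set.not_nonempty_iff_eq_empty] at h
    rw [h, AffineSubspace.span_empty] at htspan
    exact AffineSubspace.notMem_bot ℝ (EuclideanSpace ℝ (Fin n)) xtop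
      (htspan ▸ subset_affineSpan ℝ F hxtopF)
  have hcard : Fintype.card tset = ι + 1 := by
    haveI : Nonempty ↥tset := htne.to_subtype
    have h1 := htind.finrank_vectorSpan_add_one
    rw [Subtype.range_coe] at h1
    have h2 : vectorSpan ℝ tset = (affineSpan ℝ F).direction := by
      rw [← direction_affineSpan, htspan]
    rw [h2, ← hι] at h1
    exact h1.symm
  have ecard := Fintype.equivFinOfCardEq hcard
  obtain ⟨f, hfdef⟩ : ∃ f : Fin (ι+1) → EuclideanSpace ℝ (Fin n),
      f = fun j => ↑(ecard.symm j) := ⟨_, rfl⟩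
  have hfind : AffineIndependent ℝ f := by
    rw [hfdef]; exact htind.comp_embedding ecard.symm.toEmbedding
  have hfF : ∀ j, f j ∈ F := fun j => by rw [hfdef]; exact htsub (ecard.symm j).2
  obtain ⟨v, hvdef⟩ : ∃ v : Fin ι → EuclideanSpace ℝ (Fin n),
      v = fun j => f (Fin.succ j) - f 0 := ⟨_, rfl⟩
  have hv : LinearIndependent ℝ v := by
    rw [affineIndependent_iff_linearIndependent_vsub ℝ f 0] at hfind
    have hinj : Function.Injective
        (fun j : Fin ι => (⟨Fin.succ j, Fin.succ_ne_zero j⟩ : {x : Fin (ι+1) // x ≠ 0})) := by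
      intro a b hab
      exact Fin.succ_injective _ (congrArg Subtype.val hab)
    have h2 := hfind.comp _ hinj
    rw [hvdef]
    exact h2
  obtain ⟨β, hβ, hβle⟩ := exists_beta v hv
  have hve : ∀ j, v j e0 = 0 := by
    intro j
    rw [hvdef]
    show f (Fin.succ j) e0 - f 0 e0 = 0
    rw [hFtop _ (hfF (Fin.succ j)), hFtop _ (hfF 0), sub_self]
  -- constants
  obtain ⟨D, hD⟩ : ∃ D : ℝ, D = S₀ - p e0 + r := ⟨_, rfl⟩
  have hDpos : 0 < D := by rw [hD]; have := hσS; have := hpe2; linarith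
  have hDge : (S₀ - σ)/2 ≤ D := by rw [hD]; have := hpe2; linarith
  obtain ⟨c₁, hc₁⟩ : ∃ c₁ : ℝ, c₁ = r/(2*D) := ⟨_, rfl⟩
  have hc₁pos : 0 < c₁ := by rw [hc₁]; positivity
  obtain ⟨c₅, hc₅⟩ : ∃ c₅ : ℝ, c₅ = β/(10*(ι+1)) := ⟨_, rfl⟩
  have hc₅pos : 0 < c₅ := by rw [hc₅]; positivity
  obtain ⟨c₇, hc₇⟩ : ∃ c₇ : ℝ, c₇ = min c₁ 1 := ⟨_, rfl⟩
  obtain ⟨c₈, hc₈⟩ : ∃ c₈ : ℝ, c₈ = min c₅ 1 := ⟨_, rfl⟩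
  have hc₇pos : 0 < c₇ := by rw [hc₇]; exact lt_min hc₁pos one_pos
  have hc₈pos : 0 < c₈ := by rw [hc₈]; exact lt_min hc₅pos one_pos
  have hnpos : (0:ℝ) < (n:ℝ) := by exact_mod_cast hn
  obtain ⟨c₉, hc₉⟩ : ∃ c₉ : ℝ, c₉ = c₇^n * c₈^n / (n:ℝ)^n := ⟨_, rfl⟩
  have hc₉pos : 0 < c₉ := by rw [hc₉]; positivity
  obtain ⟨C, hC⟩ : ∃ C : ℝ, C = max (2*D*n/r) c₉⁻¹ + 1 := ⟨_, rfl⟩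
  have hCpos : 0 < C := by
    rw [hC]
    linarith [le_max_right (2*D*(n:ℝ)/r) c₉⁻¹, inv_pos.mpr hc₉pos]
  have hCn : 2*D*(n:ℝ)/r ≤ C := by
    rw [hC]; linarith [le_max_left (2*D*(n:ℝ)/r) c₉⁻¹]
  have hCc : c₉⁻¹ ≤ C := by
    rw [hC]; linarith [le_max_right (2*D*(n:ℝ)/r) c₉⁻¹]
  have hιn : ι ≤ n := by
    rw [hι]
    exact (Submodule.finrank_le _).trans (le_of_eq finrank_euclideanSpace_fin)
  refine ⟨C, hCpos, ?_⟩
  intro k hk s hs1 hs2 hs3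
  have hk0 : (0:ℝ) < (k:ℝ) := by exact_mod_cast hk
  have hss : 0 < S₀ - s := by
    rcases lt_or_ge 0 (S₀ - s) with h | h
    · exact h
    · exfalso
      have h9 : (k:ℝ)*(S₀-s) ≤ 0 := mul_nonpos_of_nonneg_of_nonpos hk0.le h
      linarith
  have hsltS : s < S₀ := by linarith
  have hsD : S₀ - s ≤ D := by linarith [hDge]
  obtain ⟨t, ht⟩ : ∃ t : ℝ, t = (S₀ - s)/(2*D) := ⟨_, rfl⟩
  have ht0 : 0 < t := by rw [ht]; positivity
  have ht2 : t ≤ 1/2 := by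
    rw [ht, div_le_div_iff₀ (by positivity) (by norm_num)]
    linarith
  obtain ⟨ρ, hρ⟩ : ∃ ρ : ℝ, ρ = t * r := ⟨_, rfl⟩
  have hρ0 : 0 < ρ := by rw [hρ]; positivity
  obtain ⟨θ, hθ⟩ : ∃ θ : ℝ, θ = 5*ρ/β := ⟨_, rfl⟩
  have hθ0 : 0 < θ := by rw [hθ]; positivity
  obtain ⟨M, hM⟩ : ∃ M : ℕ, M = max 1 ⌊β/(5*ρ*(ι+1))⌋₊ := ⟨_, rfl⟩
  have hM1 : 1 ≤ M := by rw [hM]; exact le_max_left _ _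
  have hsum_le : ∀ m : Fin ι → Fin M, ∑ j, ((m j : ℕ):ℝ)*θ ≤ 1 := by
    intro m
    have hb : ∀ j, ((m j : ℕ):ℝ) ≤ (M:ℝ) - 1 := by
      intro j
      have h0 : (m j : ℕ) + 1 ≤ M := (m j).isLt
      have : ((m j : ℕ):ℝ) + 1 ≤ (M:ℝ) := by exact_mod_cast h0
      linarith
    have hstep : ∑ j, ((m j : ℕ):ℝ)*θ ≤ (ι:ℝ) * (((M:ℝ)-1)*θ) := by
      calc ∑ j, ((m j : ℕ):ℝ)*θ ≤ ∑ _j : Fin ι, ((M:ℝ)-1)*θ :=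
            Finset.sum_le_sum (fun j _ => mul_le_mul_of_nonneg_right (hb j) hθ0.le)
        _ = (ι:ℝ) * (((M:ℝ)-1)*θ) := by
            rw [Finset.sum_const, Finset.card_univ, Fintype.card_fin, nsmul_eq_mul]
    rcases Nat.lt_or_ge ⌊β/(5*ρ*(ι+1))⌋₊ 2 with hc | hc
    · have hM2 : M = 1 := by rw [hM]; omega
      have hq : ((M:ℝ) - 1) = 0 := by rw [hM2]; norm_num
      have h0 : (ι:ℝ) * (((M:ℝ)-1)*θ) = 0 := by rw [hq]; ring
      linarith
    · have hM2 : M = ⌊β/(5*ρ*(ι+1))⌋₊ := by rw [hM]; omega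
      have hfl : ((⌊β/(5*ρ*(ι+1))⌋₊ : ℕ):ℝ) ≤ β/(5*ρ*(ι+1)) := Nat.floor_le (by positivity)
      have key : (β/(5*ρ*(ι+1))) * θ = 1/((ι:ℝ)+1) := by
        rw [hθ]; field_simp
      have h1 : ((M:ℝ))*θ ≤ 1/((ι:ℝ)+1) := by
        rw [← key, hM2]
        exact mul_le_mul_of_nonneg_right hfl hθ0.le
      have h2 : (ι:ℝ) * (((M:ℝ)-1)*θ) ≤ (ι:ℝ) * ((M:ℝ)*θ) := by
        apply mul_le_mul_of_nonneg_left _ (Nat.cast_nonneg ι)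
        have : ((M:ℝ)-1)*θ = (M:ℝ)*θ - θ := by ring
        linarith
      have h3 : (ι:ℝ) * (1/((ι:ℝ)+1)) ≤ 1 := by
        rw [mul_one_div, div_le_one (by positivity)]
        linarith
      have h4 : (ι:ℝ) * ((M:ℝ)*θ) ≤ (ι:ℝ) * (1/((ι:ℝ)+1)) :=
        mul_le_mul_of_nonneg_left h1 (Nat.cast_nonneg ι)
      linarith
  have hMρ : c₅ ≤ (M:ℝ) * ρ := by
    rcases le_or_gt ρ c₅ with hcase | hcase
    · have hx : β/(5*ρ*(ι+1)) = 2*c₅/ρ := by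
        rw [hc₅]; field_simp; ring
      have h3 : β/(5*ρ*(ι+1)) - 1 ≤ ((⌊β/(5*ρ*(ι+1))⌋₊ : ℕ):ℝ) := by
        linarith [Nat.lt_floor_add_one (β/(5*ρ*(ι+1)))]
      have hMge : ((⌊β/(5*ρ*(ι+1))⌋₊ : ℕ):ℝ) ≤ (M:ℝ) := by
        have : ⌊β/(5*ρ*(ι+1))⌋₊ ≤ M := by rw [hM]; exact le_max_right _ _
        exact_mod_cast this
      have h5 : 2*c₅/ρ - 1 ≤ (M:ℝ) := by rw [← hx]; linarith
      have h6 : (2*c₅/ρ)*ρ = 2*c₅ := div_mul_cancel₀ _ hρ0.ne'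
      have hint := mul_le_mul_of_nonneg_right h5 hρ0.le
      have h8 : (2*c₅/ρ - 1)*ρ = (2*c₅/ρ)*ρ - ρ := by ring
      linarith
    · have h7 : (1:ℝ) ≤ (M:ℝ) := by exact_mod_cast hM1
      have h8 : ρ ≤ (M:ℝ)*ρ := le_mul_of_one_le_left hρ0.le h7
      linarith
  obtain ⟨δ, hδ⟩ : ∃ δ : ℝ, δ = ρ/n := ⟨_, rfl⟩
  have hδ0 : 0 < δ := by rw [hδ]; positivity
  have hkδ : 1 ≤ (k:ℝ) * δ := by
    have h1 : 2*D*(n:ℝ)/r ≤ (k:ℝ)*(S₀-s) := le_trans hCn hs3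
    have h2 : (k:ℝ) * δ = ((k:ℝ)*(S₀-s)) * (r/(2*D*(n:ℝ))) := by
      rw [hδ, hρ, ht]; field_simp
    rw [h2]
    calc (1:ℝ) = (2*D*(n:ℝ)/r) * (r/(2*D*(n:ℝ))) := by field_simp
      _ ≤ ((k:ℝ)*(S₀-s)) * (r/(2*D*(n:ℝ))) :=
          mul_le_mul_of_nonneg_right h1 (by positivity)
  -- grid
  obtain ⟨X, hX⟩ : ∃ X : (Fin ι → Fin M) → EuclideanSpace ℝ (Fin n),
      X = fun m => f 0 + ∑ j, (((m j : ℕ):ℝ)*θ) • v j := ⟨_, rfl⟩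
  have hXF : ∀ m, X m ∈ F := by
    intro m
    rw [hX, hvdef]
    exact combo_mem_convex hFcv f hfF _ (fun j => by positivity) (hsum_le m)
  have hXe : ∀ m, X m e0 = S₀ := fun m => hFtop _ (hXF m)
  obtain ⟨Z, hZ⟩ : ∃ Z : (Fin ι → Fin M) → EuclideanSpace ℝ (Fin n),
      Z = fun m => (1-t) • X m + t • p := ⟨_, rfl⟩
  have hZball : ∀ m, Metric.closedBall (Z m) ρ ⊆
      Δ ∩ {x : EuclideanSpace ℝ (Fin n) | s < x e0} := by
    intro m w hw
    rw [Metric.mem_closedBall, dist_eq_norm] at hw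
    have hu : p + t⁻¹ • (w - Z m) ∈ Metric.closedBall p r := by
      rw [Metric.mem_closedBall, dist_eq_norm, add_sub_cancel_left, norm_smul,
        Real.norm_eq_abs, abs_of_pos (inv_pos.mpr ht0)]
      calc t⁻¹ * ‖w - Z m‖ ≤ t⁻¹ * ρ := mul_le_mul_of_nonneg_left hw (inv_pos.mpr ht0).le
        _ = r := by rw [hρ]; field_simp
    have huΔ : p + t⁻¹ • (w - Z m) ∈ Δ := hpball hu
    have hXΔ : X m ∈ Δ := hFΔ (hXF m)
    have hmem := hcv hXΔ huΔ (by linarith only [ht2] : (0:ℝ) ≤ 1 - t) ht0.le (by ring)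
    have hzm : Z m = (1-t) • X m + t • p := by rw [hZ]
    have heq : (1-t) • X m + t • (p + t⁻¹ • (w - Z m)) = w := by
      rw [hzm, smul_add, smul_smul, mul_inv_cancel₀ ht0.ne', one_smul]
      abel
    rw [heq] at hmem
    refine ⟨hmem, ?_⟩
    show s < w e0
    have hcoord : (1-t) * (X m e0) + t * ((p + t⁻¹ • (w - Z m)) e0) = w e0 :=
      congrArg (fun y : EuclideanSpace ℝ (Fin n) => y e0) heq
    have h4 : ‖(p + t⁻¹ • (w - Z m)) - p‖ ≤ r := by
      rw [Metric.mem_closedBall, dist_eq_norm] at hu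
      exact hu
    have h2 : |(p + t⁻¹ • (w - Z m)) e0 - p e0| ≤ r := by
      calc |(p + t⁻¹ • (w - Z m)) e0 - p e0|
          = |((p + t⁻¹ • (w - Z m)) - p) e0| := rfl
        _ ≤ ‖(p + t⁻¹ • (w - Z m)) - p‖ := abs_apply_le_norm _ _
        _ ≤ r := h4
    have hue : p e0 - r ≤ (p + t⁻¹ • (w - Z m)) e0 := by
      linarith only [(abs_le.mp h2).1]
    have hXme : X m e0 = S₀ := hXe m
    rw [hXme] at hcoord
    have h5 : t * (p e0 - r) ≤ t * ((p + t⁻¹ • (w - Z m)) e0) :=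
      mul_le_mul_of_nonneg_left hue ht0.le
    have h6 : (1-t) * S₀ + t * (p e0 - r) = S₀ - t * D := by rw [hD]; ring
    have h7 : t * D = (S₀ - s)/2 := by
      rw [ht]
      field_simp
    linarith only [hcoord, h5, h6, h7, hss]
  have hsep : ∀ m m', m ≠ m' → 2*ρ < dist (Z m) (Z m') := by
    intro m m' hmm
    obtain ⟨j, hj⟩ := Function.ne_iff.mp hmm
    obtain ⟨d, hd⟩ : ∃ d : Fin ι → ℝ,
        d = fun j => (((m j : ℕ):ℝ) - ((m' j : ℕ):ℝ)) * θ := ⟨_, rfl⟩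
    have hXd : X m - X m' = ∑ i, d i • v i := by
      rw [hX, hd]
      simp only
      rw [add_sub_add_left_eq_sub, ← Finset.sum_sub_distrib]
      apply Finset.sum_congr rfl
      intro i _
      rw [← sub_smul, sub_mul]
    have hnorm := hβle d j
    rw [← hXd] at hnorm
    have habs : θ ≤ |d j| := by
      have hne : (m j : ℕ) ≠ (m' j : ℕ) := fun hcc => hj (Fin.ext hcc)
      have hz : ((m j : ℕ):ℤ) - ((m' j : ℕ):ℤ) ≠ 0 := by
        rw [sub_ne_zero]
        exact_mod_cast hne
      have h1 : (1:ℤ) ≤ |((m j : ℕ):ℤ) - ((m' j : ℕ):ℤ)| := Int.one_le_abs hz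
      have h2 : (1:ℝ) ≤ |((m j : ℕ):ℝ) - ((m' j : ℕ):ℝ)| := by
        exact_mod_cast h1
      have h3 : |d j| = |((m j : ℕ):ℝ) - ((m' j : ℕ):ℝ)| * θ := by
        rw [hd]
        simp only
        rw [abs_mul, abs_of_pos hθ0]
      rw [h3]
      calc θ = 1 * θ := (one_mul θ).symm
        _ ≤ _ := mul_le_mul_of_nonneg_right h2 hθ0.le
    have hβθ : β * θ = 5 * ρ := by
      rw [hθ]
      field_simp
    have h8 : 5 * ρ ≤ ‖X m - X m'‖ := by
      calc 5 * ρ = β * θ := hβθ.symm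
        _ ≤ β * |d j| := mul_le_mul_of_nonneg_left habs hβ.le
        _ ≤ _ := hnorm
    have hZd : Z m - Z m' = (1-t) • (X m - X m') := by
      rw [hZ]
      simp only
      rw [add_sub_add_right_eq_sub, smul_sub]
    have h9 : dist (Z m) (Z m') = (1-t) * ‖X m - X m'‖ := by
      rw [dist_eq_norm, hZd, norm_smul, Real.norm_eq_abs,
        abs_of_pos (by linarith only [ht2] : (0:ℝ) < 1 - t)]
    rw [h9]
    have h10 : (1/2 : ℝ) * (5 * ρ) ≤ (1-t) * ‖X m - X m'‖ :=
      mul_le_mul (by linarith only [ht2]) h8 (by linarith only [hρ0]) (by linarith only [ht2])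
    linarith only [h10, hρ0]
  -- finsets of lattice points
  obtain ⟨Bx, hBx⟩ : ∃ Bx : (Fin ι → Fin M) → Finset (Fin n → ℤ),
      Bx = fun m => Fintype.piFinset
        (fun i => Finset.Icc ⌈(k:ℝ)*(Z m i - δ)⌉ ⌊(k:ℝ)*(Z m i + δ)⌋) := ⟨_, rfl⟩
  obtain ⟨g, hg⟩ : ∃ g : (Fin n → ℤ) → EuclideanSpace ℝ (Fin n),
      g = fun a => WithLp.toLp 2 (fun i => (a i : ℝ)/(k:ℝ)) := ⟨_, rfl⟩
  have hgapp : ∀ a i, g a i = (a i : ℝ)/(k:ℝ) := by intro a i; rw [hg]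
  have hginj : Function.Injective g := by
    intro a b hab
    funext i
    have h1 : g a i = g b i := congrArg (fun y : EuclideanSpace ℝ (Fin n) => y i) hab
    rw [hgapp, hgapp] at h1
    field_simp at h1
    exact_mod_cast h1
  have hgball : ∀ m, ∀ a ∈ Bx m, g a ∈ Metric.closedBall (Z m) ρ := by
    intro m a ha
    rw [hBx] at ha
    rw [Fintype.mem_piFinset] at ha
    rw [Metric.mem_closedBall, dist_eq_norm]
    apply norm_le_of_coords hn _ ρ hρ0.le
    intro i
    have hai := ha i
    rw [Finset.mem_Icc] at hai
    have h1 : (k:ℝ)*(Z m i - δ) ≤ ((a i : ℤ):ℝ) := Int.ceil_le.mp hai.1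
    have h2 : ((a i : ℤ):ℝ) ≤ (k:ℝ)*(Z m i + δ) := Int.le_floor.mp hai.2
    have h3 : (g a - Z m) i = ((a i :ℤ):ℝ)/(k:ℝ) - Z m i := by
      show g a i - Z m i = _
      rw [hgapp]
    rw [h3, ← hδ, abs_le]
    have h4 : Z m i - δ ≤ ((a i : ℤ):ℝ)/(k:ℝ) := by
      rw [le_div_iff₀ hk0]
      linarith only [h1]
    have h5 : ((a i : ℤ):ℝ)/(k:ℝ) ≤ Z m i + δ := by
      rw [div_le_iff₀ hk0]
      linarith only [h2]
    constructor
    · linarith only [h4]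
    · linarith only [h5]
  have hglat : ∀ a : Fin n → ℤ, g a ∈ lpts n k := by
    intro a
    show ∀ i, ∃ m : ℤ, (k : ℝ) * (g a) i = (m : ℝ)
    intro i
    refine ⟨a i, ?_⟩
    rw [hgapp]
    field_simp
  obtain ⟨SS, hSS⟩ : ∃ SS : Finset (EuclideanSpace ℝ (Fin n)),
      SS = (Finset.univ : Finset (Fin ι → Fin M)).biUnion (fun m => (Bx m).image g) :=
    ⟨_, rfl⟩
  have hdisj : ∀ m ∈ (Finset.univ : Finset (Fin ι → Fin M)),
      ∀ m' ∈ (Finset.univ : Finset (Fin ι → Fin M)), m ≠ m' →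
      Disjoint ((Bx m).image g) ((Bx m').image g) := by
    intro m _ m' _ hmm
    rw [Finset.disjoint_left]
    rintro y hy hy'
    rw [Finset.mem_image] at hy hy'
    obtain ⟨a, ha, rfl⟩ := hy
    obtain ⟨a', ha', hgaa⟩ := hy'
    have h1 := hgball m a ha
    have h2 : g a ∈ Metric.closedBall (Z m') ρ := hgaa ▸ hgball m' a' ha'
    rw [Metric.mem_closedBall] at h1 h2
    have h3 := dist_triangle (Z m) (g a) (Z m')
    rw [dist_comm (Z m) (g a)] at h3
    rw [dist_comm (g a) (Z m')] at h2
    have h6 := hsep m m' hmm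
    have h4 : dist (Z m') (g a) = dist (g a) (Z m') := dist_comm _ _
    linarith only [h1, h2, h3, h6, h4]
  have hcardSS : ((M:ℝ))^ι * ((k:ℝ)*δ)^n ≤ (SS.card : ℝ) := by
    have hcard1 : ∀ m : Fin ι → Fin M, ((Bx m).image g).card = (Bx m).card :=
      fun m => Finset.card_image_of_injective _ hginj
    have hcard2 : ∀ m, ((k:ℝ)*δ)^n ≤ ((Bx m).card : ℝ) := by
      intro m
      rw [hBx]
      simp only
      rw [Fintype.card_piFinset, Nat.cast_prod]
      have hstep : ∀ i : Fin n, ((k:ℝ)*δ) ≤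
          (((Finset.Icc ⌈(k:ℝ)*(Z m i - δ)⌉ ⌊(k:ℝ)*(Z m i + δ)⌋).card : ℕ) : ℝ) := by
        intro i
        have hc := card_Icc_ge ((k:ℝ)*(Z m i - δ)) ((k:ℝ)*(Z m i + δ))
        have heq2 : (k:ℝ)*(Z m i + δ) - (k:ℝ)*(Z m i - δ) - 1 = 2*((k:ℝ)*δ) - 1 := by ring
        rw [heq2] at hc
        linarith only [hc, hkδ]
      calc ((k:ℝ)*δ)^n = ∏ _i : Fin n, ((k:ℝ)*δ) := by
            rw [Finset.prod_const, Finset.card_univ, Fintype.card_fin]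
        _ ≤ _ := Finset.prod_le_prod (fun i _ => by positivity) (fun i _ => hstep i)
    rw [hSS, Finset.card_biUnion hdisj]
    calc (M:ℝ)^ι * ((k:ℝ)*δ)^n = ∑ _m : Fin ι → Fin M, ((k:ℝ)*δ)^n := by
          rw [Finset.sum_const, Finset.card_univ, Fintype.card_fun, Fintype.card_fin,
            Fintype.card_fin, nsmul_eq_mul]
          push_cast
          ring
      _ ≤ ∑ m, ((((Bx m).image g).card : ℕ) : ℝ) :=
          Finset.sum_le_sum (fun m _ => by rw [hcard1 m]; exact hcard2 m)
      _ = ((∑ m, ((Bx m).image g).card : ℕ) : ℝ) := by rw [Nat.cast_sum]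
  -- inclusion into target
  have hsub : (SS : Set (EuclideanSpace ℝ (Fin n))) ⊆
      Δ ∩ {x : EuclideanSpace ℝ (Fin n) | s < x e0} ∩ lpts n k := by
    intro y hy
    rw [hSS] at hy
    simp only [Finset.coe_biUnion, Finset.mem_coe, Finset.mem_biUnion, Finset.mem_image,
      Set.mem_iUnion] at hy
    obtain ⟨m, -, a, ha, rfl⟩ := hy
    exact ⟨hZball m (hgball m a ha), hglat a⟩
  have hfinS : (Δ ∩ {x : EuclideanSpace ℝ (Fin n) | s < x e0} ∩ lpts n k).Finite := by
    apply Set.Finite.subset (finite_inter_lpts hk (hcp.isBounded))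
    intro x hx
    exact ⟨hx.1.1, hx.2⟩
  have hchain : (SS.card : ℝ) ≤
      ((Δ ∩ {x : EuclideanSpace ℝ (Fin n) | s < x e0} ∩ lpts n k).ncard : ℝ) := by
    have h1 : (SS : Set (EuclideanSpace ℝ (Fin n))).ncard ≤
        (Δ ∩ {x : EuclideanSpace ℝ (Fin n) | s < x e0} ∩ lpts n k).ncard :=
      Set.ncard_le_ncard hsub hfinS
    rw [Set.ncard_coe_finset] at h1
    exact_mod_cast h1
  -- final arithmetic
  have hfinal : C⁻¹ * (S₀ - s) ^ (n - ι) * (k : ℝ) ^ n ≤ ((M:ℝ))^ι * ((k:ℝ)*δ)^n := by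
    have hρc : ρ = c₁*(S₀-s) := by rw [hρ, ht, hc₁]; ring
    have hc71 : c₇ ≤ 1 := by rw [hc₇]; exact min_le_right _ _
    have hc7c1 : c₇ ≤ c₁ := by rw [hc₇]; exact min_le_left _ _
    have hc81 : c₈ ≤ 1 := by rw [hc₈]; exact min_le_right _ _
    have hc8c5 : c₈ ≤ c₅ := by rw [hc₈]; exact min_le_left _ _
    have hb1 : (c₇*((k:ℝ)*(S₀-s)))^(n-ι) ≤ ((k:ℝ)*ρ)^(n-ι) := by
      apply pow_le_pow_left₀ (by positivity)
      rw [hρc]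
      have h1 : c₇*((k:ℝ)*(S₀-s)) ≤ c₁*((k:ℝ)*(S₀-s)) :=
        mul_le_mul_of_nonneg_right hc7c1 (by positivity)
      linarith only [h1]
    have hb2 : (c₈*(k:ℝ))^ι ≤ ((k:ℝ)*ρ*(M:ℝ))^ι := by
      apply pow_le_pow_left₀ (by positivity)
      have h1 : c₈ ≤ (M:ℝ)*ρ := le_trans hc8c5 hMρ
      have h2 : c₈*(k:ℝ) ≤ ((M:ℝ)*ρ)*(k:ℝ) := mul_le_mul_of_nonneg_right h1 hk0.le
      linarith only [h2]
    have e1 : ((k:ℝ)*ρ)^(n-ι) * ((k:ℝ)*ρ*(M:ℝ))^ι = ((k:ℝ)*ρ)^n * (M:ℝ)^ι := by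
      rw [mul_pow ((k:ℝ)*ρ) (M:ℝ) ι, ← mul_assoc, ← pow_add, Nat.sub_add_cancel hιn]
    have e2 : (c₇*((k:ℝ)*(S₀-s)))^(n-ι) = c₇^(n-ι) * ((k:ℝ))^(n-ι) * (S₀-s)^(n-ι) := by
      rw [mul_pow, mul_pow]
      ring
    have e3 : (c₈*(k:ℝ))^ι = c₈^ι * (k:ℝ)^ι := mul_pow _ _ _
    have p1 : c₇^n ≤ c₇^(n-ι) := pow_le_pow_of_le_one hc₇pos.le hc71 (Nat.sub_le n ι)
    have p2 : c₈^n ≤ c₈^ι := pow_le_pow_of_le_one hc₈pos.le hc81 hιn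
    have ekn : (k:ℝ)^(n-ι) * (k:ℝ)^ι = (k:ℝ)^n := by
      rw [← pow_add, Nat.sub_add_cancel hιn]
    have key : c₇^n * c₈^n * ((S₀-s)^(n-ι) * (k:ℝ)^n) ≤ ((k:ℝ)*ρ)^n * (M:ℝ)^ι := by
      calc c₇^n * c₈^n * ((S₀-s)^(n-ι) * (k:ℝ)^n)
          ≤ c₇^(n-ι) * c₈^ι * ((S₀-s)^(n-ι) * (k:ℝ)^n) := by
            apply mul_le_mul_of_nonneg_right _ (by positivity)
            exact mul_le_mul p1 p2 (by positivity) (by positivity)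
        _ = (c₇^(n-ι) * (k:ℝ)^(n-ι) * (S₀-s)^(n-ι)) * (c₈^ι * (k:ℝ)^ι) := by
            rw [← ekn]
            ring
        _ = (c₇*((k:ℝ)*(S₀-s)))^(n-ι) * (c₈*(k:ℝ))^ι := by rw [e2, e3]
        _ ≤ ((k:ℝ)*ρ)^(n-ι) * ((k:ℝ)*ρ*(M:ℝ))^ι :=
            mul_le_mul hb1 hb2 (by positivity) (by positivity)
        _ = ((k:ℝ)*ρ)^n * (M:ℝ)^ι := e1
    have eδ : ((k:ℝ)*δ)^n = ((k:ℝ)*ρ)^n / (n:ℝ)^n := by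
      rw [hδ]
      have h1 : (k:ℝ)*(ρ/(n:ℝ)) = ((k:ℝ)*ρ)/(n:ℝ) := by ring
      rw [h1, div_pow]
    have hCinv : C⁻¹ ≤ c₉ := by
      calc C⁻¹ ≤ (c₉⁻¹)⁻¹ := inv_anti₀ (inv_pos.mpr hc₉pos) hCc
        _ = c₉ := inv_inv c₉
    calc C⁻¹ * (S₀-s)^(n-ι) * (k:ℝ)^n ≤ c₉ * ((S₀-s)^(n-ι) * (k:ℝ)^n) := by
          have h1 := mul_le_mul_of_nonneg_right hCinv
            (show (0:ℝ) ≤ (S₀-s)^(n-ι) * (k:ℝ)^n by positivity)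
          linarith only [h1]
      _ = (c₇^n * c₈^n * ((S₀-s)^(n-ι) * (k:ℝ)^n)) / (n:ℝ)^n := by rw [hc₉]; ring
      _ ≤ (((k:ℝ)*ρ)^n * (M:ℝ)^ι) / (n:ℝ)^n := by
          rw [div_eq_mul_inv, div_eq_mul_inv]
          exact mul_le_mul_of_nonneg_right key
            (inv_nonneg.mpr (by positivity : (0:ℝ) ≤ (n:ℝ)^n))
      _ = (M:ℝ)^ι * ((k:ℝ)*δ)^n := by rw [eδ]; ring
  calc C⁻¹ * (S₀ - s) ^ (n - ι) * (k : ℝ) ^ n ≤ ((M:ℝ))^ι * ((k:ℝ)*δ)^n := hfinal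
    _ ≤ (SS.card : ℝ) := hcardSS
    _ ≤ _ := hchain
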